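/- Let σ be a permutation of [n] with d descents, and define the weight disparity Δ(σ) = d(n−d−1) − w(σ). If σ does not begin with the entry 1, then Δ(σ) ≥ n−d−1. -/

import Mathlib

open List


/-- Number of descents of a sequence. -/
def desL : List ℕ → ℕ
  | a :: b :: t => (if b < a then 1 else 0) + desL (b :: t)
  | _ => 0

/-- Repeatedly split a sequence just after its maximum element. -/
def splitLeftAux : ℕ → List ℕ → List (List ℕ)
  | 0, _ => []
  | _, [] => []
  | fuel + 1, l =>
    let i := l.idxOf (l.foldr Nat.max 0)
    l.take (i + 1) :: splitLeftAux fuel (l.drop (i + 1))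

def splitLeft (l : List ℕ) : List (List ℕ) := splitLeftAux l.length l

/-- Split a sequence at its minimum element, splitting the left part
repeatedly just after its maximum. -/
def splitAll (l : List ℕ) : List (List ℕ) :=
  let m := l.foldr Nat.min (l.headD 0)
  let i := l.idxOf m
  splitLeft (l.take i) ++ [[m]] ++ [l.drop (i + 1)]

/-- The weight of a sequence of distinct naturals (fuelled version; the fuel
`(length+2)^2` in `weightL` is more than the recursion depth ever needed). -/
def weightAux : ℕ → List ℕ → ℕ
  | 0, _ => 0
  | fuel + 1, l =>
    if l.length ≤ 1 ∨ l.Pairwise (· < ·) then 0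
    else ((splitAll (l ++ [l.foldr Nat.max 0 + 1])).map
      (fun p => desL p + weightAux fuel p)).sum

/-- The weight of a permutation viewed as a sequence. -/
def weightL (l : List ℕ) : ℕ := weightAux ((l.length + 2) ^ 2) l

/-- `l` is a permutation of `[n] = {1,…,n}` written as a sequence. -/
def IsPermList (n : ℕ) (l : List ℕ) : Prop := l.Perm (List.range' 1 n)


lemma weightAux_succ (f l) : weightAux (f+1) l = if l.length ≤ 1 ∨ l.Pairwise (· < ·) then 0
    else ((splitAll (l ++ [l.foldr Nat.max 0 + 1])).map
      (fun p => desL p + weightAux f p)).sum := rfl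

example (f x) (xs : List ℕ) : splitLeftAux (f+1) (x::xs) =
    (x::xs).take ((x::xs).idxOf ((x::xs).foldr Nat.max 0) + 1) ::
      splitLeftAux f ((x::xs).drop ((x::xs).idxOf ((x::xs).foldr Nat.max 0) + 1)) := rfl

lemma desL_nil : desL [] = 0 := rfl
lemma desL_single (a : ℕ) : desL [a] = 0 := rfl
lemma desL_cons (a b : ℕ) (t : List ℕ) : desL (a::b::t) = (if b < a then 1 else 0) + desL (b::t) := rfl

lemma desL_le : ∀ l : List ℕ, l ≠ [] → desL l + 1 ≤ l.length
  | [_], _ => by simp [desL]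
  | a :: b :: t, _ => by
    have := desL_le (b::t) (by simp)
    rw [desL_cons]
    simp only [length_cons] at *
    split <;> omega

lemma desL_append_cons : ∀ (u : List ℕ), u ≠ [] → ∀ b t,
    desL (u ++ b :: t) = desL u + (if b < u.getLastD 0 then 1 else 0) + desL (b :: t)
  | [a], _, b, t => by simp [desL]
  | a :: c :: u', _, b, t => by
    have ih := desL_append_cons (c::u') (by simp) b t
    show desL (a :: (c :: (u' ++ b :: t))) = _
    rw [desL_cons, show (c :: (u' ++ b :: t)) = (c :: u') ++ b :: t from rfl, ih,
      desL_cons, show (a :: c :: u').getLastD 0 = (c :: u').getLastD 0 from rfl]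
    omega

lemma desL_sorted : ∀ s : List ℕ, s.IsChain (· < ·) → desL s = 0
  | [], _ => rfl
  | [_], _ => rfl
  | a :: b :: t, h => by
    rw [isChain_cons_cons] at h
    rw [desL_cons, if_neg (by omega), desL_sorted (b::t) h.2]

lemma desL_append_chain (q s : List ℕ) (hs : s.IsChain (· < ·))
    (hqs : ∀ a ∈ q, ∀ b ∈ s, a < b) : desL (q ++ s) = desL q := by
  cases s with
  | nil => simp
  | cons b t =>
    cases q with
    | nil => simpa [desL_nil] using desL_sorted _ hs
    | cons x xs =>
      rw [desL_append_cons (x::xs) (by simp) b t, desL_sorted (b::t) hs,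
        if_neg (by
          have := hqs ((x::xs).getLastD 0) (by
            have : (x::xs).getLastD 0 = (x::xs).getLast (by simp) := by
              rw [getLastD_eq_getLast?, getLast?_eq_getLast (by simp)]; rfl
            rw [this]; exact getLast_mem _) b (by simp)
          omega)]
      omega

lemma le_foldr_max : ∀ (l : List ℕ), ∀ x ∈ l, x ≤ l.foldr Nat.max 0
  | a :: t, x, hx => by
    simp only [mem_cons] at hx
    rcases hx with rfl | h
    · exact Nat.le_max_left _ _
    · have := le_foldr_max t x h
      simp only [foldr_cons]
      exact le_trans this (Nat.le_max_right _ _)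

lemma foldr_min_le (c : ℕ) : ∀ (l : List ℕ), l.foldr Nat.min c ≤ c ∧ ∀ x ∈ l, l.foldr Nat.min c ≤ x
  | [] => ⟨le_rfl, by simp⟩
  | a :: t => by
    obtain ⟨h1, h2⟩ := foldr_min_le c t
    refine ⟨?_, ?_⟩
    · simp only [foldr_cons]; exact le_trans (Nat.min_le_right _ _) h1
    · intro x hx
      simp only [mem_cons] at hx
      rcases hx with rfl | h
      · exact Nat.min_le_left _ _
      · exact le_trans (Nat.min_le_right _ _) (h2 x h)

lemma nat_max_or (x y : ℕ) : Nat.max x y = x ∨ Nat.max x y = y := max_choice x y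

lemma nat_min_or (x y : ℕ) : Nat.min x y = x ∨ Nat.min x y = y := min_choice x y

lemma foldr_min_mem (c : ℕ) : ∀ (l : List ℕ), l.foldr Nat.min c = c ∨ l.foldr Nat.min c ∈ l
  | [] => Or.inl rfl
  | a :: t => by
    have key : (a::t).foldr Nat.min c = a ∨ (a::t).foldr Nat.min c = t.foldr Nat.min c :=
      nat_min_or a (t.foldr Nat.min c)
    rcases key with h | h
    · right; rw [h]; exact mem_cons_self
    · rcases foldr_min_mem c t with h2 | h2
      · left; rw [h, h2]
      · right; rw [h]; exact mem_cons_of_mem _ h2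

lemma foldr_max_mem : ∀ (l : List ℕ), l ≠ [] → l.foldr Nat.max 0 ∈ l
  | [a], _ => by simp
  | a :: b :: t, _ => by
    have key : (a::b::t).foldr Nat.max 0 = a ∨
        (a::b::t).foldr Nat.max 0 = (b::t).foldr Nat.max 0 :=
      nat_max_or a ((b::t).foldr Nat.max 0)
    rcases key with h | h
    · rw [h]; exact mem_cons_self
    · rw [h]; exact mem_cons_of_mem _ (foldr_max_mem (b::t) (by simp))

lemma splitLeftAux_nil (f : ℕ) : splitLeftAux f [] = [] := by cases f <;> rfl

lemma splitLeftAux_eq : ∀ (f g : ℕ) (l : List ℕ), l.length ≤ f → l.length ≤ g →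
    splitLeftAux f l = splitLeftAux g l
  | 0, g, l, hf, _ => by
    rw [length_eq_zero_iff.1 (Nat.le_zero.1 hf)]; rw [splitLeftAux_nil, splitLeftAux_nil]
  | f + 1, g, [], _, _ => by rw [splitLeftAux_nil, splitLeftAux_nil]
  | f + 1, 0, x :: xs, _, hg => by simp at hg
  | f + 1, g + 1, x :: xs, hf, hg => by
    show _ :: _ = _ :: _
    congr 1
    exact splitLeftAux_eq f g _ (by simp only [length_drop, length_cons] at *; omega)
      (by simp only [length_drop, length_cons] at *; omega)

lemma splitLeft_cons (v : List ℕ) (hv : v ≠ []) :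
    splitLeft v = v.take (v.idxOf (v.foldr Nat.max 0) + 1) ::
      splitLeft (v.drop (v.idxOf (v.foldr Nat.max 0) + 1)) := by
  obtain ⟨x, xs, rfl⟩ := exists_cons_of_ne_nil hv
  show splitLeftAux (xs.length + 1) _ = _
  show _ :: _ = _ :: _
  congr 1
  exact splitLeftAux_eq _ _ _ (by simp [length_drop]) (by simp [length_drop])

lemma weightAux_short (f : ℕ) (l : List ℕ) (h : l.length ≤ 1) : weightAux f l = 0 := by
  cases f with
  | zero => rfl
  | succ f => rw [weightAux_succ, if_pos (Or.inl h)]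

lemma desL_cons_of_le (m : ℕ) (q : List ℕ) (h : ∀ b ∈ q, m ≤ b) : desL (m :: q) = desL q := by
  cases q with
  | nil => rfl
  | cons b t =>
    rw [desL_cons, if_neg (Nat.not_lt.2 (h b (mem_cons_self))), Nat.zero_add]


section MainInduction

variable (fuel : ℕ)
  (hmain : ∀ u s : List ℕ, (u ++ s).Nodup → s.IsChain (· < ·) →
    (∀ a ∈ u, ∀ b ∈ s, a < b) →
    weightAux fuel (u ++ s) ≤ desL u * (u.length - desL u - 1))

include hmain

lemma piece_bound (w : List ℕ) (c : ℕ) (hnd : (w ++ [c]).Nodup)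
    (hmax : ∀ x ∈ w, x < c) :
    desL (w ++ [c]) + weightAux fuel (w ++ [c]) ≤
      desL (w ++ [c]) * ((w ++ [c]).length - desL (w ++ [c]) - 1) := by
  have hdes : desL (w ++ [c]) = desL w :=
    desL_append_chain w [c] (isChain_singleton c)
      (by intro a ha b hb; simp only [mem_singleton] at hb; subst hb; exact hmax a ha)
  have hweight : weightAux fuel (w ++ [c]) ≤ desL w * (w.length - desL w - 1) :=
    hmain w [c] hnd (isChain_singleton c)
      (by intro a ha b hb; simp only [mem_singleton] at hb; subst hb; exact hmax a ha)
  have hlen : (w ++ [c]).length = w.length + 1 := by simp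
  rw [hdes, hlen]
  rcases Nat.eq_zero_or_pos (desL w) with h0 | h0
  · rw [h0] at hweight ⊢; simpa using hweight
  · have hwne : w ≠ [] := by intro h; rw [h, desL_nil] at h0; omega
    have hle := desL_le w hwne
    have heq : w.length + 1 - desL w - 1 = (w.length - desL w - 1) + 1 := by omega
    rw [heq, Nat.mul_succ]
    omega

lemma splitLeft_sum (N : ℕ) : ∀ v : List ℕ, v.length ≤ N → v.Nodup →
    ((splitLeft v).map (fun p => desL p + weightAux fuel p)).sum ≤
      desL v * (v.length - desL v - 1) := by
  induction N with
  | zero =>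
    intro v hv _
    rw [length_eq_zero_iff.1 (Nat.le_zero.1 hv)]
    simp [splitLeft, splitLeftAux]
  | succ N ih =>
    intro v hv hnd
    rcases eq_or_ne v [] with rfl | hvne
    · simp [splitLeft, splitLeftAux]
    · have hMv : v.foldr Nat.max 0 ∈ v := foldr_max_mem v hvne
      set M := v.foldr Nat.max 0 with hM
      set i := v.idxOf M with hi
      have hilt : i < v.length := idxOf_lt_length_iff.2 hMv
      have hvM : v[i] = M := getElem_idxOf hilt
      have hsplit := splitLeft_cons v hvne
      rw [← hM, ← hi] at hsplit
      set piece := v.take (i+1) with hpiece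
      set rest := v.drop (i+1) with hrest
      have hvpr : piece ++ rest = v := take_append_drop _ _
      have hplen : piece.length = i + 1 := by
        rw [hpiece, length_take]; omega
      have hrlen : rest.length = v.length - (i+1) := by rw [hrest, length_drop]
      have hptake : piece = v.take i ++ [M] := by
        rw [hpiece, take_succ, getElem?_eq_getElem hilt, hvM]; rfl
      have hdisj : M ∉ v.take i := by
        have h2 : (v.take i ++ v.drop i).Nodup := by rw [take_append_drop]; exact hnd
        have hdr : v.drop i = M :: rest := by
          rw [drop_eq_getElem_cons hilt, hvM, hrest]
        rw [hdr] at h2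
        intro hmem
        exact disjoint_of_nodup_append h2 hmem (mem_cons_self)
      have hmaxlt : ∀ x ∈ v.take i, x < M := by
        intro x hx
        have h1 := le_foldr_max v x (mem_of_mem_take hx)
        have h2 : x ≠ M := fun h => hdisj (h ▸ hx)
        rw [← hM] at h1; omega
      have hpnd : piece.Nodup := hnd.sublist (take_sublist _ _)
      have hbp : desL piece + weightAux fuel piece ≤
          desL piece * (piece.length - desL piece - 1) := by
        rw [hptake]
        exact piece_bound fuel hmain (v.take i) M (hptake ▸ hpnd) hmaxlt
      have hdes_piece : desL piece = desL (v.take i) := by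
        rw [hptake]
        exact desL_append_chain _ [M] (isChain_singleton M)
          (by intro a ha b hb; simp only [mem_singleton] at hb; subst hb; exact hmaxlt a ha)
      have hdp : desL piece = 0 ∨ desL piece + 1 ≤ i := by
        rcases eq_or_ne (v.take i) [] with he | hne2
        · left; rw [hdes_piece, he, desL_nil]
        · right
          rw [hdes_piece]
          have := desL_le _ hne2
          rw [length_take] at this
          omega
      rcases eq_or_ne rest [] with hre | hrne
      · have hpv : piece = v := by rw [← hvpr, hre, append_nil]
        rw [hsplit, hre, hpv]
        show desL v + weightAux fuel v + ((splitLeft []).map _).sum ≤ _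
        rw [show splitLeft [] = [] from rfl]
        simpa using (hpv ▸ hbp)
      · have hrnd : rest.Nodup := hnd.sublist (drop_sublist _ _)
        have hSrest := ih rest (by omega) hrnd
        obtain ⟨b, t, hbt⟩ := exists_cons_of_ne_nil hrne
        have hbM : b < M := by
          have hbr : b ∈ rest := by rw [hbt]; exact mem_cons_self
          have hbv : b ∈ v := by rw [hrest] at hbr; exact mem_of_mem_drop hbr
          have h1 := le_foldr_max v b hbv
          rw [← hM] at h1
          have h2 : b ≠ M := by
            intro h
            have hMp : M ∈ piece := by rw [hptake]; exact mem_append_right _ (mem_singleton_self M)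
            have hdisj2 : Disjoint piece rest := disjoint_of_nodup_append (hvpr ▸ hnd)
            exact hdisj2 hMp (h ▸ (hbt ▸ mem_cons_self))
          omega
        have hdv : desL v = desL piece + 1 + desL rest := by
          conv_lhs => rw [← hvpr, hbt]
          rw [desL_append_cons piece (by rw [hptake]; simp) b t]
          have hgl : piece.getLastD 0 = M := by rw [hptake]; simp [getLastD_concat]
          rw [hgl, if_pos hbM, ← hbt]
        rw [hsplit]
        simp only [map_cons, sum_cons]
        have hdrle : desL rest + 1 ≤ rest.length := desL_le rest hrne
        set dp := desL piece with hdp'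
        set dr := desL rest with hdr'
        set A := i - dp with hA
        set Bq := rest.length - dr - 1 with hB
        have h1 : dp + weightAux fuel piece ≤ dp * A := by
          have : piece.length - dp - 1 = A := by omega
          rw [← this]; exact hbp
        have h2 : ((splitLeft rest).map (fun p => desL p + weightAux fuel p)).sum ≤ dr * Bq :=
          hSrest
        have hvlen : v.length = (i + 1) + rest.length := by omega
        have hN : v.length - desL v - 1 = A + Bq := by
          rcases hdp with h | h <;> omega
        rw [hN, hdv]
        have e1 : dp * A ≤ dp * (A + Bq) := Nat.mul_le_mul_left _ (Nat.le_add_right _ _)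
        have e2 : dr * Bq ≤ dr * (A + Bq) := Nat.mul_le_mul_left _ (Nat.le_add_left _ _)
        have e3 : (dp + 1 + dr) * (A + Bq) = dp * (A + Bq) + (A + Bq) + dr * (A + Bq) := by ring
        omega



omit hmain in
lemma splitAll_def (l : List ℕ) : splitAll l =
    splitLeft (l.take (l.idxOf (l.foldr Nat.min (l.headD 0)))) ++
      [[l.foldr Nat.min (l.headD 0)]] ++
      [l.drop (l.idxOf (l.foldr Nat.min (l.headD 0)) + 1)] := rfl

set_option maxHeartbeats 1000000 in
lemma step (u s : List ℕ) (hnd : (u ++ s).Nodup) (hs : s.IsChain (· < ·))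
    (hus : ∀ a ∈ u, ∀ b ∈ s, a < b) (hu : u ≠ [])
    (hns : ¬((u ++ s).length ≤ 1 ∨ (u ++ s).Pairwise (· < ·))) :
    weightAux (fuel + 1) (u ++ s) +
      (if ∀ x ∈ u, u.headD 0 ≤ x then 0 else u.length - desL u - 1) ≤
      desL u * (u.length - desL u - 1) := by
  rw [weightAux_succ, if_neg hns]
  set top := (u ++ s).foldr Nat.max 0 + 1 with htopdef
  have htop : ∀ x ∈ u ++ s, x < top := fun x hx => Nat.lt_succ_of_le (le_foldr_max _ x hx)
  set l' := (u ++ s) ++ [top] with hl'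
  have hheadD : l'.headD 0 = u.head hu := by
    obtain ⟨a, u', rfl⟩ := exists_cons_of_ne_nil hu
    rfl
  have hhead_mem : u.head hu ∈ l' := mem_append_left _ (mem_append_left _ (head_mem hu))
  set m := l'.foldr Nat.min (l'.headD 0) with hmdef
  have hm_le : ∀ x ∈ l', m ≤ x := (foldr_min_le _ l').2
  have hm_mem : m ∈ l' := by
    rcases foldr_min_mem (l'.headD 0) l' with h | h
    · rw [hmdef, h, hheadD]; exact hhead_mem
    · exact h
  have hm_u : m ∈ u := by
    rcases mem_append.1 hm_mem with h | h
    · rcases mem_append.1 h with h' | h'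
      · exact h'
      · exfalso
        have h1 := hus (u.head hu) (head_mem hu) m h'
        have h2 := hm_le (u.head hu) hhead_mem
        omega
    · exfalso
      simp only [mem_singleton] at h
      have h1 := htop (u.head hu) (mem_append_left _ (head_mem hu))
      have h2 := hm_le (u.head hu) hhead_mem
      omega
  have hndu : u.Nodup := hnd.sublist (sublist_append_left u s)
  have hindex : l'.idxOf m = u.idxOf m := by
    rw [hl', idxOf_append_of_mem (mem_append_left s hm_u), idxOf_append_of_mem hm_u]
  set j := u.idxOf m with hjdef
  have hj : j < u.length := idxOf_lt_length_iff.2 hm_u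
  have huj : u[j] = m := getElem_idxOf hj
  set q := u.drop (j + 1) with hqdef
  have htake : l'.take j = u.take j := by
    rw [hl', take_append_of_le_length (by simp only [length_append]; omega),
      take_append_of_le_length (le_of_lt hj)]
  have hdrop : l'.drop (j + 1) = q ++ (s ++ [top]) := by
    rw [hl', drop_append_of_le_length (by simp only [length_append]; omega),
      drop_append_of_le_length (by omega), append_assoc, hqdef]
  have hsplitAll : splitAll l' = splitLeft (u.take j) ++ [[m]] ++ [q ++ (s ++ [top])] := by
    rw [splitAll_def, ← hmdef, hindex, htake, hdrop]
  rw [hsplitAll]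
  simp only [map_append, sum_append, map_cons, map_nil, sum_cons, sum_nil]
  have hm1 : desL [m] = 0 := rfl
  have hm2 : weightAux fuel [m] = 0 := weightAux_short fuel [m] (by simp)
  have hchain : (s ++ [top]).IsChain (· < ·) := by
    refine isChain_append.2 ⟨hs, isChain_singleton top, ?_⟩
    intro x hx y hy
    simp only [head?_cons, Option.mem_def, Option.some.injEq] at hy
    subst hy
    exact htop x (mem_append_right u (mem_of_mem_getLast? hx))
  have hqu : ∀ x ∈ q, x ∈ u := fun x hx => by
    rw [hqdef] at hx; exact mem_of_mem_drop hx
  have hqs' : ∀ a ∈ q, ∀ b ∈ s ++ [top], a < b := by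
    intro x hx b hb
    rcases mem_append.1 hb with hb | hb
    · exact hus x (hqu x hx) b hb
    · simp only [mem_singleton] at hb; subst hb
      exact htop x (mem_append_left s (hqu x hx))
  have hdes_rho : desL (q ++ (s ++ [top])) = desL q := desL_append_chain _ _ hchain hqs'
  have hndl' : (u ++ (s ++ [top])).Nodup := by
    rw [← append_assoc]
    refine nodup_append.2 ⟨hnd, nodup_singleton top, ?_⟩
    intro x hx y hy hxy
    simp only [mem_singleton] at hy
    subst hy hxy
    exact lt_irrefl _ (htop _ hx)
  have hrho_nd : (q ++ (s ++ [top])).Nodup :=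
    hndl'.sublist ((drop_sublist (j + 1) u).append (Sublist.refl _))
  have hrho := hmain q (s ++ [top]) hrho_nd hchain hqs'
  have hv_nd : (u.take j).Nodup := hndu.sublist (take_sublist j u)
  have hSv := splitLeft_sum fuel hmain (u.take j).length (u.take j) le_rfl hv_nd
  have hu_eq : u = u.take j ++ m :: q := by
    conv_lhs => rw [← take_append_drop j u]
    rw [drop_eq_getElem_cons hj, huj, hqdef]
  have hmnv : m ∉ u.take j := by
    have h2 : (u.take j ++ m :: q).Nodup := hu_eq ▸ hndu
    intro hmem
    exact disjoint_of_nodup_append h2 hmem (mem_cons_self)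
  have hmq : desL (m :: q) = desL q :=
    desL_cons_of_le m q (fun b hb => hm_le b
      (mem_append_left _ (mem_append_left _ (hqu b hb))))
  have hlenu : u.length = j + 1 + q.length := by
    have := congrArg length hu_eq
    simp only [length_append, length_cons, length_take] at this
    omega
  have he : desL q = 0 ∨ desL q + 1 ≤ q.length := by
    rcases eq_or_ne q [] with h | h
    · left; rw [h]; rfl
    · right; exact desL_le q h
  have hwrho : weightAux fuel (q ++ (s ++ [top])) ≤ desL q * (q.length - desL q - 1) := hrho
  have hrho' : desL q + weightAux fuel (q ++ (s ++ [top])) ≤ desL q * (q.length - desL q) := by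
    rcases he with h | h
    · rw [h] at hwrho ⊢; simpa using hwrho
    · have heq : q.length - desL q = (q.length - desL q - 1) + 1 := by omega
      rw [heq, Nat.mul_succ]
      omega
  rcases Nat.eq_zero_or_pos j with hj0 | hj1
  · -- j = 0 : head of u is the minimum, penalty is 0
    have hheadm : u.headD 0 = m := by
      conv_lhs => rw [hu_eq, hj0]
      rfl
    have hcond : ∀ x ∈ u, u.headD 0 ≤ x := by
      intro x hx
      rw [hheadm]
      exact hm_le x (mem_append_left _ (mem_append_left _ hx))
    rw [if_pos hcond]
    have hS0 : ((splitLeft (u.take j)).map (fun p => desL p + weightAux fuel p)).sum = 0 := by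
      rw [hj0, take_zero]; rfl
    have hdesu : desL u = desL q := by
      conv_lhs => rw [hu_eq, hj0, take_zero, nil_append]
      exact hmq
    have hgoal_eq : desL u * (u.length - desL u - 1) = desL q * (q.length - desL q) := by
      rw [hdesu, hlenu, hj0]
      congr 1
      omega
    rw [hgoal_eq]
    omega
  · -- j ≥ 1 : penalty case
    have hvne : u.take j ≠ [] := by
      intro h
      have := congrArg length h
      simp only [length_take, length_nil] at this
      omega
    have h00 : u.headD 0 = u[0]'(by omega) := by
      obtain ⟨a, u', rfl⟩ := exists_cons_of_ne_nil hu
      rfl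
    have hm_lt_head : m < u[0]'(by omega) := by
      have h1 : m ≤ u[0]'(by omega) :=
        hm_le _ (mem_append_left _ (mem_append_left _ (getElem_mem _)))
      have h2 : u[0]'(by omega) ≠ m := by
        intro hEq
        have h3 : u[0]'(by omega) = u[j] := by rw [huj]; exact hEq
        have := (hndu.getElem_inj_iff).1 h3
        omega
      omega
    rw [if_neg (by
      intro hall
      have h1 := hall m hm_u
      rw [h00] at h1
      omega)]
    have hlastD : (u.take j).getLastD 0 = (u.take j).getLast hvne := by
      rw [getLastD_eq_getLast?, getLast?_eq_getLast hvne]; rfl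
    have hlast_gt : m < (u.take j).getLastD 0 := by
      have h1 : (u.take j).getLastD 0 ∈ u.take j := by
        rw [hlastD]; exact getLast_mem hvne
      have h2 : m ≤ (u.take j).getLastD 0 :=
        hm_le _ (mem_append_left _ (mem_append_left _ (mem_of_mem_take h1)))
      have h3 : (u.take j).getLastD 0 ≠ m := fun h => hmnv (h ▸ h1)
      omega
    have hdesu : desL u = desL (u.take j) + 1 + desL q := by
      conv_lhs => rw [hu_eq]
      rw [desL_append_cons _ hvne m q, if_pos hlast_gt, hmq]
    have hDv : desL (u.take j) + 1 ≤ j := by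
      have := desL_le _ hvne
      rw [length_take] at this
      omega
    have hSv' : ((splitLeft (u.take j)).map (fun p => desL p + weightAux fuel p)).sum ≤
        desL (u.take j) * (j - desL (u.take j) - 1) := by
      have hlt : (u.take j).length = j := by rw [length_take]; omega
      rw [hlt] at hSv
      exact hSv
    rw [hdesu]
    have hN : u.length - (desL (u.take j) + 1 + desL q) - 1 =
        (j - desL (u.take j) - 1) + (q.length - desL q) := by
      rcases he with h | h <;> omega
    rw [hN]
    have e1 : desL (u.take j) * (j - desL (u.take j) - 1) ≤
        desL (u.take j) * ((j - desL (u.take j) - 1) + (q.length - desL q)) :=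
      Nat.mul_le_mul_left _ (Nat.le_add_right _ _)
    have e2 : desL q * (q.length - desL q) ≤
        desL q * ((j - desL (u.take j) - 1) + (q.length - desL q)) :=
      Nat.mul_le_mul_left _ (Nat.le_add_left _ _)
    have e3 : (desL (u.take j) + 1 + desL q) * ((j - desL (u.take j) - 1) + (q.length - desL q)) =
        desL (u.take j) * ((j - desL (u.take j) - 1) + (q.length - desL q)) +
        ((j - desL (u.take j) - 1) + (q.length - desL q)) +
        desL q * ((j - desL (u.take j) - 1) + (q.length - desL q)) := by ring
    omega

end MainInduction

lemma main_bound : ∀ (fuel : ℕ) (u s : List ℕ), (u ++ s).Nodup → s.IsChain (· < ·) →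
    (∀ a ∈ u, ∀ b ∈ s, a < b) →
    weightAux fuel (u ++ s) ≤ desL u * (u.length - desL u - 1) := by
  intro fuel
  induction fuel with
  | zero => intro u s _ _ _; exact Nat.zero_le _
  | succ f ih =>
    intro u s hnd hs hus
    by_cases hc : (u ++ s).length ≤ 1 ∨ (u ++ s).Pairwise (· < ·)
    · rw [weightAux_succ, if_pos hc]; exact Nat.zero_le _
    · rcases eq_or_ne u [] with rfl | hu
      · exact absurd (Or.inr (by simpa using isChain_iff_pairwise.1 hs)) hc
      · exact le_trans (Nat.le_add_right _ _) (step f ih u s hnd hs hus hu hc)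


/-- If a permutation of `[n]` with `d` descents does not begin with `1`, its
weight disparity `d(n-d-1) - w(σ)` is at least `n-d-1`. -/
theorem disparity_bound (n d : ℕ) (l : List ℕ) (hperm : IsPermList n l)
    (hd : desL l = d) (h1 : l.head? ≠ some 1) :
    n - d - 1 ≤ d * (n - d - 1) - weightL l := by
  have hperm' : l.Perm (List.range' 1 n) := hperm
  have hlen : l.length = n := by simpa using hperm'.length_eq
  rcases Nat.eq_zero_or_pos n with rfl | hn
  · have hl0 : l = [] := hperm'.eq_nil
    subst hl0
    have hd0 : d = 0 := by rw [← hd]; rfl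
    subst hd0
    have hw0 : weightL [] = 0 := weightAux_short _ _ (by simp)
    simp [hw0]
  · have hnd : l.Nodup := hperm'.nodup_iff.2 (nodup_range' ..)
    have hlne : l ≠ [] := by
      intro h; rw [h] at hlen; simp at hlen; omega
    have hmem : ∀ x ∈ l, 1 ≤ x ∧ x < 1 + n := fun x hx =>
      mem_range'_1.1 (hperm'.mem_iff.1 hx)
    have h1l : (1:ℕ) ∈ l := hperm'.mem_iff.2 (mem_range'_1.2 ⟨le_rfl, by omega⟩)
    obtain ⟨a, t, rfl⟩ := exists_cons_of_ne_nil hlne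
    have ha1 : a ≠ 1 := fun h => h1 (by rw [head?_cons, h])
    have hagt : 1 < a := by
      have := (hmem a (mem_cons_self)).1
      omega
    have hns : ¬(((a::t) ++ []).length ≤ 1 ∨ ((a::t) ++ []).Pairwise (· < ·)) := by
      rw [append_nil]
      rintro (h | h)
      · have ht0 : t = [] := by
          simp only [length_cons] at h
          exact length_eq_zero_iff.1 (by omega)
        subst ht0
        have hn1 : n = 1 := by simp at hlen; omega
        have : range' 1 n = [1] := by rw [hn1]; rfl
        rw [this] at hperm'
        have := perm_singleton.1 hperm'
        simp at this
        exact ha1 this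
      · have heq : a :: t = range' 1 n := hperm'.eq_of_pairwise (fun a _ b _ h1 h2 => by omega) h (pairwise_lt_range' (s := 1) (n := n))
        obtain ⟨k, rfl⟩ : ∃ k, n = k + 1 := ⟨n - 1, by omega⟩
        rw [range'_succ] at heq
        exact ha1 (by injection heq)
    have hcond : ¬ ∀ x ∈ (a::t), (a::t).headD 0 ≤ x := by
      intro hall
      have := hall 1 h1l
      simp only [headD_cons] at this
      omega
    have hF : ((a::t).length + 2)^2 = ((n+2)^2 - 1) + 1 := by
      rw [hlen]
      have h2 : 0 < (n+2)^2 := by positivity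
      omega
    have hstep := step ((n+2)^2 - 1) (main_bound ((n+2)^2 - 1)) (a::t) []
      (by simpa using hnd) List.isChain_nil (by intro x hx b hb; simp at hb)
      (by simp) hns
    rw [if_neg hcond, append_nil, hlen, hd] at hstep
    have hw : weightL (a::t) + (n - d - 1) ≤ d * (n - d - 1) := by
      rw [weightL, hF]
      exact hstep
    omega
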